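/- Let n, m ≥ 1 and let f : ℤ → ℤ be a nondecreasing map satisfying f(x+n) = f(x)+m for all x ∈ ℤ. Define f_♯(y) as the least element of {x ∈ ℤ | y ≤ f(x)} and f^♯(y) as the greatest element of {x ∈ ℤ | f(x) ≤ y} (both sets are nonempty and bounded in the relevant direction). Then f_♯ and f^♯ are nondecreasing maps satisfying f_♯(y+m) = f_♯(y)+n and f^♯(y+m) = f^♯(y)+n for all y, and the two constructions are mutually inverse on such data: (f_♯)^♯ = f and (f^♯)_♯ = f. -/

import Mathlib

/-- Self-duality `Λ ≅ Λᵒ`: for a nondecreasing `f : ℤ → ℤ` with `f (x + n) = f x + m`,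
the adjoints `f_♯ y = min {x | y ≤ f x}` and `f^♯ y = max {x | f x ≤ y}` exist, are
nondecreasing with `f_♯ (y + m) = f_♯ y + n` and `f^♯ (y + m) = f^♯ y + n`, and the
two constructions are mutually inverse: `(f_♯)^♯ = f` and `(f^♯)_♯ = f`. -/
theorem stmt_6 (n m : ℤ) (hn : 1 ≤ n) (hm : 1 ≤ m) (f : ℤ → ℤ)
    (hmono : Monotone f) (hper : ∀ x : ℤ, f (x + n) = f x + m)
    (fs fu : ℤ → ℤ)
    (hfs : ∀ y : ℤ, IsLeast {x : ℤ | y ≤ f x} (fs y))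
    (hfu : ∀ y : ℤ, IsGreatest {x : ℤ | f x ≤ y} (fu y)) :
    (∀ y : ℤ, ∃ z : ℤ, IsLeast {x : ℤ | y ≤ f x} z) ∧
    (∀ y : ℤ, ∃ z : ℤ, IsGreatest {x : ℤ | f x ≤ y} z) ∧
    Monotone fs ∧ Monotone fu ∧
    (∀ y : ℤ, fs (y + m) = fs y + n) ∧
    (∀ y : ℤ, fu (y + m) = fu y + n) ∧
    (∀ x : ℤ, IsGreatest {y : ℤ | fs y ≤ x} (f x)) ∧
    (∀ x : ℤ, IsLeast {y : ℤ | x ≤ fu y} (f x)) := by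
  have hper' : ∀ x : ℤ, f (x - n) = f x - m := by
    intro x
    have := hper (x - n)
    simp at this
    omega
  refine ⟨fun y => ⟨fs y, hfs y⟩, fun y => ⟨fu y, hfu y⟩, ?_, ?_, ?_, ?_, ?_, ?_⟩
  · intro a b hab
    exact (hfs a).2 (le_trans hab (hfs b).1)
  · intro a b hab
    exact (hfu b).2 (le_trans (hfu a).1 hab)
  · intro y
    have h1 : fs (y + m) ≤ fs y + n := by
      refine (hfs (y + m)).2 ?_
      show y + m ≤ f (fs y + n)
      rw [hper]
      have : y ≤ f (fs y) := (hfs y).1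
      omega
    have h2 : fs y ≤ fs (y + m) - n := by
      refine (hfs y).2 ?_
      show y ≤ f (fs (y + m) - n)
      rw [hper']
      have : y + m ≤ f (fs (y + m)) := (hfs (y + m)).1
      omega
    omega
  · intro y
    have h1 : fu y + n ≤ fu (y + m) := by
      refine (hfu (y + m)).2 ?_
      show f (fu y + n) ≤ y + m
      rw [hper]
      have : f (fu y) ≤ y := (hfu y).1
      omega
    have h2 : fu (y + m) - n ≤ fu y := by
      refine (hfu y).2 ?_
      show f (fu (y + m) - n) ≤ y
      rw [hper']
      have : f (fu (y + m)) ≤ y + m := (hfu (y + m)).1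
      omega
    omega
  · intro x
    constructor
    · exact (hfs (f x)).2 (le_refl (f x))
    · intro y hy
      exact le_trans (hfs y).1 (hmono hy)
  · intro x
    constructor
    · exact (hfu (f x)).2 (le_refl (f x))
    · intro y hy
      exact le_trans (hmono hy) (hfu y).1
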